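/- Let (X_1, X_2, X_3) have the mixture law with c_2 = 6 + √3: with probability 1/c_2 for each j ∈ {1,2,3}, the vector is U e_j with U ~ Uniform(0,1]; with probability 1/c_2 for each pair 1 ≤ i < j ≤ 3, the vector is V (e_i + e_j) where V has density 2(1 − v) on (0,1]; and with probability √3/c_2, the vector is W (e_1 + e_2 + e_3) where W has distribution function G_2(z) = 1 − (1 − z)(1 − G_1(z)) on [0,1]. Then for every s ∈ (0,1), P(N_{s,3} = 2 | N_{s,3} ≥ 2) = √3/((1 − G_1(s))/(1 − s) + √3), and this does not converge as s ↑ 1; hence FD_{3,2} does not exist even though FD_{3,1} exists. -/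

import Mathlib

open MeasureTheory Filter Set Topology Classical

/-- Conditional probability `P(A | B)` as a real number. -/
noncomputable def condP {Ω : Type*} [MeasurableSpace Ω] (μ : Measure Ω) (A B : Set Ω) : ℝ :=
  (μ (A ∩ B)).toReal / (μ B).toReal

/-- The density `g₁` on `[0,1]`. -/
noncomputable def g1 (y : ℝ) : ℝ :=
  if ∃ k : ℕ, 1 - 1 / 2 ^ k ≤ y ∧ y ≤ 1 - 3 / 2 ^ (k + 2) then 2 else 0

/-- The distribution function of `g₁`. -/
noncomputable def G1 (y : ℝ) : ℝ := ∫ t in (0:ℝ)..y, g1 t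

/-- The distribution function `G₂(z) = 1 - (1-z)(1-G₁(z))` on `[0,1]`. -/
noncomputable def G2 (z : ℝ) : ℝ :=
  if z < 0 then 0 else if z ≤ 1 then 1 - (1 - z) * (1 - G1 z) else 1

/-- The uniform distribution on `(0,1]`. -/
noncomputable def unif : Measure ℝ := volume.restrict (Set.Ioc 0 1)

/-- The law with density `2(1-v)` on `(0,1]`. -/
noncomputable def nuV : Measure ℝ :=
  volume.withDensity fun v => ENNReal.ofReal (if v ∈ Set.Ioc (0:ℝ) 1 then 2 * (1 - v) else 0)

/-- The mixture law of `(X₁, X₂, X₃)` with `c₂ = 6 + √3`: the three axes carry the uniform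
law, the three diagonal pairs carry the law `nuV`, and the main diagonal carries the law `νW`
whose distribution function is `G₂`. -/
noncomputable def law3 (nuW : Measure ℝ) : Measure (ℝ × ℝ × ℝ) :=
  ENNReal.ofReal (1 / (6 + Real.sqrt 3)) •
    (Measure.map (fun u => (u, (0:ℝ), (0:ℝ))) unif +
     Measure.map (fun u => ((0:ℝ), u, (0:ℝ))) unif +
     Measure.map (fun u => ((0:ℝ), (0:ℝ), u)) unif) +
  ENNReal.ofReal (1 / (6 + Real.sqrt 3)) •
    (Measure.map (fun v => (v, v, (0:ℝ))) nuV +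
     Measure.map (fun v => ((0:ℝ), v, v)) nuV +
     Measure.map (fun v => (v, (0:ℝ), v)) nuV) +
  ENNReal.ofReal (Real.sqrt 3 / (6 + Real.sqrt 3)) •
    Measure.map (fun w => (w, w, w)) nuW


/-! ### Auxiliary facts about `g1` and `G1` -/

def Sset : Set ℝ := ⋃ k : ℕ, Set.Icc (1 - 1 / 2 ^ k) (1 - 3 / 2 ^ (k + 2))

lemma g1_eq : g1 = Sset.indicator (fun _ => 2) := by
  funext y
  unfold g1 Sset
  rw [Set.indicator_apply]
  simp [Set.mem_iUnion, Set.mem_Icc]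

lemma measurable_g1 : Measurable g1 := by
  have h : MeasurableSet Sset := MeasurableSet.iUnion fun k => measurableSet_Icc
  rw [g1_eq]; exact measurable_const.indicator h

lemma g1_nonneg (y : ℝ) : 0 ≤ g1 y := by unfold g1; split <;> norm_num

lemma g1_le_two (y : ℝ) : g1 y ≤ 2 := by unfold g1; split <;> norm_num

lemma intervalIntegrable_g1 (a b : ℝ) : IntervalIntegrable g1 volume a b := by
  rw [intervalIntegrable_iff]
  apply Integrable.mono' (g := fun _ => (2:ℝ))
  · exact integrableOn_const measure_Ioc_lt_top.ne
  · exact measurable_g1.aestronglyMeasurable.restrict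
  · filter_upwards with x
    rw [Real.norm_eq_abs, abs_of_nonneg (g1_nonneg x)]
    exact g1_le_two x

lemma G1_add (a b : ℝ) : G1 b = G1 a + ∫ t in a..b, g1 t := by
  unfold G1
  rw [intervalIntegral.integral_add_adjacent_intervals
    (intervalIntegrable_g1 0 a) (intervalIntegrable_g1 a b)]

lemma G1_mono : Monotone G1 := by
  intro a b hab
  rw [G1_add a b]
  have : 0 ≤ ∫ t in a..b, g1 t :=
    intervalIntegral.integral_nonneg hab (fun x _ => g1_nonneg x)
  linarith

lemma ord1 (k : ℕ) : 1 - 1 / (2:ℝ) ^ k ≤ 1 - 3 / 2 ^ (k + 2) := by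
  have h : (0:ℝ) < 2 ^ k := by positivity
  rw [sub_le_sub_iff_left, pow_add]
  rw [div_le_div_iff₀ (by positivity) h]
  norm_num; nlinarith

lemma ord2 (k : ℕ) : 1 - 3 / (2:ℝ) ^ (k + 2) ≤ 1 - 1 / 2 ^ (k + 1) := by
  have h : (0:ℝ) < 2 ^ k := by positivity
  rw [sub_le_sub_iff_left, pow_add, pow_add]
  rw [div_le_div_iff₀ (by positivity) (by positivity)]
  nlinarith

lemma int_on (k : ℕ) :
    (∫ t in (1 - 1 / (2:ℝ) ^ k)..(1 - 3 / 2 ^ (k + 2)), g1 t) = 1 / 2 ^ (k + 1) := by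
  rw [intervalIntegral.integral_of_le (ord1 k)]
  rw [setIntegral_congr_fun measurableSet_Ioc (g := fun _ => (2:ℝ))]
  · rw [setIntegral_const, Real.volume_real_Ioc_of_le (ord1 k), smul_eq_mul]
    have h : (0:ℝ) < 2 ^ k := by positivity
    rw [pow_add, pow_add]
    field_simp
    ring
  · intro y hy
    unfold g1
    rw [if_pos ⟨k, le_of_lt hy.1, hy.2⟩]

lemma int_gap (k : ℕ) :
    (∫ t in (1 - 3 / (2:ℝ) ^ (k + 2))..(1 - 1 / 2 ^ (k + 1)), g1 t) = 0 := by
  rw [intervalIntegral.integral_of_le (ord2 k), integral_Ioc_eq_integral_Ioo]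
  rw [setIntegral_congr_fun measurableSet_Ioo (g := fun _ => (0:ℝ))]
  · simp
  · intro y hy
    unfold g1
    rw [if_neg]
    rintro ⟨j, hj1, hj2⟩
    rcases le_or_gt j k with h | h
    · have : 3 / (2:ℝ) ^ (k + 2) ≤ 3 / 2 ^ (j + 2) := by
        apply div_le_div_of_nonneg_left (by norm_num) (by positivity)
        exact pow_le_pow_right₀ (by norm_num) (by omega)
      linarith [hy.1]
    · have : 1 / (2:ℝ) ^ j ≤ 1 / 2 ^ (k + 1) := by
        apply div_le_div_of_nonneg_left (by norm_num) (by positivity)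
        exact pow_le_pow_right₀ (by norm_num) (by omega)
      linarith [hy.2]

lemma G1_a (k : ℕ) : G1 (1 - 1 / 2 ^ k) = 1 - 1 / 2 ^ k := by
  induction k with
  | zero => simp [G1]
  | succ k ih =>
    rw [G1_add (1 - 3 / 2 ^ (k + 2)), int_gap,
      G1_add (1 - 1 / 2 ^ k) (1 - 3 / 2 ^ (k+2)), int_on, ih]
    have h : (0:ℝ) < 2 ^ k := by positivity
    rw [pow_add]
    field_simp
    ring

lemma G1_b (k : ℕ) : G1 (1 - 3 / 2 ^ (k + 2)) = 1 - 1 / 2 ^ (k + 1) := by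
  rw [G1_add (1 - 1 / 2 ^ k) (1 - 3 / 2 ^ (k+2)), int_on, G1_a]
  have h : (0:ℝ) < 2 ^ k := by positivity
  rw [pow_add]
  field_simp
  ring

lemma G1_zero : G1 0 = 0 := by simp [G1]

lemma G1_nonneg {s : ℝ} (hs : 0 ≤ s) : 0 ≤ G1 s := G1_zero ▸ G1_mono hs

lemma G1_le_one {s : ℝ} (hs : s < 1) : G1 s ≤ 1 := by
  obtain ⟨k, hk⟩ := exists_pow_lt_of_lt_one (by linarith : (0:ℝ) < 1 - s)
    (by norm_num : (1:ℝ)/2 < 1)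
  have h2 : ((1:ℝ)/2) ^ k = 1 / 2 ^ k := by rw [div_pow, one_pow]
  have hsk : s ≤ 1 - 1 / 2 ^ k := by rw [← h2]; linarith
  calc G1 s ≤ G1 (1 - 1/2^k) := G1_mono hsk
    _ = 1 - 1/2^k := G1_a k
    _ ≤ 1 := by
        have h3 : (0:ℝ) < 1/2^k := by positivity
        linarith

lemma G1_tendsto : Tendsto G1 (𝓝[<] (1:ℝ)) (𝓝 1) := by
  rw [Metric.tendsto_nhdsWithin_nhds]
  intro ε hε
  obtain ⟨k, hk⟩ := exists_pow_lt_of_lt_one hε (by norm_num : (1:ℝ)/2 < 1)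
  have h2 : ((1:ℝ)/2) ^ k = 1 / 2 ^ k := by rw [div_pow, one_pow]
  rw [h2] at hk
  refine ⟨1/2^k, by positivity, fun {s} hs hd => ?_⟩
  rw [Real.dist_eq] at hd ⊢
  have hs1 : s < 1 := hs
  have hsk : 1 - 1/2^k < s := by
    rw [abs_of_neg (by linarith : s - 1 < 0)] at hd; linarith
  have hG1 : 1 - 1/2^k ≤ G1 s := (G1_a k) ▸ G1_mono hsk.le
  have hG2 : G1 s ≤ 1 := G1_le_one hs1
  rw [abs_of_nonpos (by linarith)]
  linarith

/-! ### Auxiliary measure computations -/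

lemma unif_Ioi {s : ℝ} (hs : 0 ≤ s) : unif (Set.Ioi s) = ENNReal.ofReal (1 - s) := by
  unfold unif
  rw [Measure.restrict_apply measurableSet_Ioi]
  have hset : Set.Ioi s ∩ Set.Ioc 0 1 = Set.Ioc s 1 := by
    ext x; simp only [Set.mem_inter_iff, Set.mem_Ioi, Set.mem_Ioc]
    constructor
    · rintro ⟨h1, h2, h3⟩; exact ⟨h1, h3⟩
    · rintro ⟨h1, h2⟩; exact ⟨h1, lt_of_le_of_lt hs h1, h2⟩
  rw [hset, Real.volume_Ioc]

lemma nuV_Ioi {s : ℝ} (hs : 0 ≤ s) (hs1 : s ≤ 1) : nuV (Set.Ioi s) = ENNReal.ofReal ((1 - s)^2) := by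
  unfold nuV
  rw [withDensity_apply _ measurableSet_Ioi]
  have hcong : ∀ v, ENNReal.ofReal (if v ∈ Set.Ioc (0:ℝ) 1 then 2 * (1 - v) else 0)
      = (Set.Ioc (0:ℝ) 1).indicator (fun v => ENNReal.ofReal (2 * (1 - v))) v := by
    intro v; rw [Set.indicator_apply]; split <;> simp
  calc ∫⁻ v in Set.Ioi s, ENNReal.ofReal (if v ∈ Set.Ioc (0:ℝ) 1 then 2 * (1 - v) else 0)
      = ∫⁻ v in Set.Ioi s, (Set.Ioc (0:ℝ) 1).indicator (fun v => ENNReal.ofReal (2 * (1 - v))) v :=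
        lintegral_congr hcong
    _ = ∫⁻ v in Set.Ioc (0:ℝ) 1 ∩ Set.Ioi s, ENNReal.ofReal (2 * (1 - v)) := by
        rw [lintegral_indicator measurableSet_Ioc, Measure.restrict_restrict measurableSet_Ioc]
    _ = ∫⁻ v in Set.Ioc s 1, ENNReal.ofReal (2 * (1 - v)) := by
        have hset : Set.Ioc (0:ℝ) 1 ∩ Set.Ioi s = Set.Ioc s 1 := by
          ext x; simp only [Set.mem_inter_iff, Set.mem_Ioi, Set.mem_Ioc]
          constructor
          · rintro ⟨⟨h1, h2⟩, h3⟩; exact ⟨h3, h2⟩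
          · rintro ⟨h1, h2⟩; exact ⟨⟨lt_of_le_of_lt hs h1, h2⟩, h1⟩
        rw [hset]
    _ = ENNReal.ofReal (∫ v in Set.Ioc s 1, 2 * (1 - v)) := by
        rw [← ofReal_integral_eq_lintegral_ofReal]
        · exact (continuous_const.mul (continuous_const.sub continuous_id)).integrableOn_Ioc
        · apply (ae_restrict_iff' measurableSet_Ioc).2
          filter_upwards with v hv
          simp only [Pi.zero_apply]
          have := hv.2; nlinarith
    _ = ENNReal.ofReal ((1 - s)^2) := by
        congr 1
        rw [← intervalIntegral.integral_of_le hs1]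
        have hfun : ∀ v : ℝ, 2 * (1 - v) = 2 - 2 * v := fun v => by ring
        simp_rw [hfun]
        have h1 : IntervalIntegrable (fun v : ℝ => 2 * v) volume s 1 :=
          (continuous_const.mul continuous_id).intervalIntegrable s 1
        rw [intervalIntegral.integral_sub intervalIntegrable_const h1,
          intervalIntegral.integral_const, intervalIntegral.integral_const_mul,
          integral_id, smul_eq_mul]
        ring

lemma nuW_Ioi {nuW : Measure ℝ} [IsProbabilityMeasure nuW]
    (hW : ∀ z, nuW (Set.Iic z) = ENNReal.ofReal (G2 z)) {s : ℝ} (hs : s ∈ Set.Ioo (0:ℝ) 1) :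
    nuW (Set.Ioi s) = ENNReal.ofReal ((1 - s) * (1 - G1 s)) := by
  have hG2 : G2 s = 1 - (1 - s) * (1 - G1 s) := by
    unfold G2
    rw [if_neg (by linarith [hs.1]), if_pos (le_of_lt hs.2)]
  have hx0 : 0 ≤ (1 - s) * (1 - G1 s) :=
    mul_nonneg (by linarith [hs.2]) (by linarith [G1_le_one hs.2])
  have hx1 : (1 - s) * (1 - G1 s) ≤ 1 := by
    have h1 : 1 - s ≤ 1 := by linarith [hs.1]
    have h2 : 1 - G1 s ≤ 1 := by linarith [G1_nonneg hs.1.le]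
    have h3 : (0:ℝ) ≤ 1 - G1 s := by linarith [G1_le_one hs.2]
    have h4 : (0:ℝ) ≤ 1 - s := by linarith [hs.2]
    nlinarith
  have hcompl : Set.Ioi s = (Set.Iic s)ᶜ := by simp
  rw [hcompl, measure_compl measurableSet_Iic (measure_ne_top _ _), measure_univ, hW s, hG2]
  rw [← ENNReal.ofReal_one, ← ENNReal.ofReal_sub _ (by linarith)]
  norm_num

/-! ### The counting function on `ℝ × ℝ × ℝ` -/

noncomputable def cnt (s : ℝ) (p : ℝ × ℝ × ℝ) : ℕ :=
  (if s < p.1 then 1 else 0) + (if s < p.2.1 then 1 else 0) + (if s < p.2.2 then 1 else 0)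

lemma measurable_cnt (s : ℝ) : Measurable (cnt s) := by
  unfold cnt
  have m1 : MeasurableSet {p : ℝ × ℝ × ℝ | s < p.1} :=
    measurableSet_lt measurable_const measurable_fst
  have m2 : MeasurableSet {p : ℝ × ℝ × ℝ | s < p.2.1} :=
    measurableSet_lt measurable_const (measurable_fst.comp measurable_snd)
  have m3 : MeasurableSet {p : ℝ × ℝ × ℝ | s < p.2.2} :=
    measurableSet_lt measurable_const (measurable_snd.comp measurable_snd)
  exact ((Measurable.ite m1 measurable_const measurable_const).add
    (Measurable.ite m2 measurable_const measurable_const)).add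
    (Measurable.ite m3 measurable_const measurable_const)

lemma law3_apply (nuW : Measure ℝ) {A : Set (ℝ × ℝ × ℝ)}
    (hA : MeasurableSet A) :
    law3 nuW A =
      ENNReal.ofReal (1 / (6 + Real.sqrt 3)) *
        (unif ((fun u => (u, (0:ℝ), (0:ℝ))) ⁻¹' A) + unif ((fun u => ((0:ℝ), u, (0:ℝ))) ⁻¹' A) +
          unif ((fun u => ((0:ℝ), (0:ℝ), u)) ⁻¹' A)) +
      ENNReal.ofReal (1 / (6 + Real.sqrt 3)) *
        (nuV ((fun v => (v, v, (0:ℝ))) ⁻¹' A) + nuV ((fun v => ((0:ℝ), v, v)) ⁻¹' A) +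
          nuV ((fun v => (v, (0:ℝ), v)) ⁻¹' A)) +
      ENNReal.ofReal (Real.sqrt 3 / (6 + Real.sqrt 3)) * nuW ((fun w => (w, w, w)) ⁻¹' A) := by
  have mu1 : Measurable (fun u : ℝ => (u, (0:ℝ), (0:ℝ))) := by fun_prop
  have mu2 : Measurable (fun u : ℝ => ((0:ℝ), u, (0:ℝ))) := by fun_prop
  have mu3 : Measurable (fun u : ℝ => ((0:ℝ), (0:ℝ), u)) := by fun_prop
  have mv1 : Measurable (fun v : ℝ => (v, v, (0:ℝ))) := by fun_prop
  have mv2 : Measurable (fun v : ℝ => ((0:ℝ), v, v)) := by fun_prop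
  have mv3 : Measurable (fun v : ℝ => (v, (0:ℝ), v)) := by fun_prop
  have mw : Measurable (fun w : ℝ => (w, w, w)) := by fun_prop
  simp only [law3, Measure.coe_add, Measure.coe_smul, Pi.add_apply, Pi.smul_apply,
    smul_eq_mul, Measure.add_apply,
    Measure.map_apply mu1 hA, Measure.map_apply mu2 hA, Measure.map_apply mu3 hA,
    Measure.map_apply mv1 hA, Measure.map_apply mv2 hA, Measure.map_apply mv3 hA,
    Measure.map_apply mw hA]

lemma sqrt3_pos : (0:ℝ) < Real.sqrt 3 := Real.sqrt_pos.mpr (by norm_num)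

lemma law3_eq2 (nuW : Measure ℝ) [IsProbabilityMeasure nuW]
    (hW : ∀ z, nuW (Set.Iic z) = ENNReal.ofReal (G2 z)) {s : ℝ} (hs : s ∈ Set.Ioo (0:ℝ) 1) :
    law3 nuW {p | cnt s p = 2} = ENNReal.ofReal (3 * (1 - s)^2 / (6 + Real.sqrt 3)) := by
  have hs0 : ¬ s < 0 := by linarith [hs.1]
  have hA : MeasurableSet {p : ℝ × ℝ × ℝ | cnt s p = 2} :=
    (measurable_cnt s) (measurableSet_singleton 2)
  rw [law3_apply nuW hA]
  have e1 : (fun u : ℝ => (u, (0:ℝ), (0:ℝ))) ⁻¹' {p | cnt s p = 2} = ∅ := by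
    ext u
    simp only [Set.mem_preimage, Set.mem_setOf_eq, cnt, if_neg hs0,
      Set.mem_empty_iff_false, iff_false]
    split_ifs <;> omega
  have e2 : (fun u : ℝ => ((0:ℝ), u, (0:ℝ))) ⁻¹' {p | cnt s p = 2} = ∅ := by
    ext u
    simp only [Set.mem_preimage, Set.mem_setOf_eq, cnt, if_neg hs0,
      Set.mem_empty_iff_false, iff_false]
    split_ifs <;> omega
  have e3 : (fun u : ℝ => ((0:ℝ), (0:ℝ), u)) ⁻¹' {p | cnt s p = 2} = ∅ := by
    ext u
    simp only [Set.mem_preimage, Set.mem_setOf_eq, cnt, if_neg hs0,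
      Set.mem_empty_iff_false, iff_false]
    split_ifs <;> omega
  have f1 : (fun v : ℝ => (v, v, (0:ℝ))) ⁻¹' {p | cnt s p = 2} = Set.Ioi s := by
    ext v
    simp only [Set.mem_preimage, Set.mem_setOf_eq, cnt, if_neg hs0, Set.mem_Ioi]
    split_ifs with h <;> simp [h]
  have f2 : (fun v : ℝ => ((0:ℝ), v, v)) ⁻¹' {p | cnt s p = 2} = Set.Ioi s := by
    ext v
    simp only [Set.mem_preimage, Set.mem_setOf_eq, cnt, if_neg hs0, Set.mem_Ioi]
    split_ifs with h <;> simp [h]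
  have f3 : (fun v : ℝ => (v, (0:ℝ), v)) ⁻¹' {p | cnt s p = 2} = Set.Ioi s := by
    ext v
    simp only [Set.mem_preimage, Set.mem_setOf_eq, cnt, if_neg hs0, Set.mem_Ioi]
    split_ifs with h <;> simp [h]
  have g0 : (fun w : ℝ => (w, w, w)) ⁻¹' {p | cnt s p = 2} = ∅ := by
    ext w
    simp only [Set.mem_preimage, Set.mem_setOf_eq, cnt, Set.mem_empty_iff_false, iff_false]
    split_ifs <;> omega
  rw [e1, e2, e3, f1, f2, f3, g0, nuV_Ioi hs.1.le hs.2.le]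
  simp only [measure_empty, add_zero, zero_add, mul_zero]
  have hb : (0:ℝ) ≤ (1 - s)^2 := sq_nonneg _
  rw [← ENNReal.ofReal_add hb hb, ← ENNReal.ofReal_add (by positivity) hb,
    ← ENNReal.ofReal_mul (by positivity)]
  congr 1
  ring

lemma law3_ge2 (nuW : Measure ℝ) [IsProbabilityMeasure nuW]
    (hW : ∀ z, nuW (Set.Iic z) = ENNReal.ofReal (G2 z)) {s : ℝ} (hs : s ∈ Set.Ioo (0:ℝ) 1) :
    law3 nuW {p | 2 ≤ cnt s p} =
      ENNReal.ofReal ((3 * (1 - s)^2 + Real.sqrt 3 * ((1 - s) * (1 - G1 s))) / (6 + Real.sqrt 3)) := by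
  have hs0 : ¬ s < 0 := by linarith [hs.1]
  have hA : MeasurableSet {p : ℝ × ℝ × ℝ | 2 ≤ cnt s p} :=
    (measurable_cnt s) measurableSet_Ici
  rw [law3_apply nuW hA]
  have e1 : (fun u : ℝ => (u, (0:ℝ), (0:ℝ))) ⁻¹' {p | 2 ≤ cnt s p} = ∅ := by
    ext u
    simp only [Set.mem_preimage, Set.mem_setOf_eq, cnt, if_neg hs0,
      Set.mem_empty_iff_false, iff_false]
    split_ifs <;> omega
  have e2 : (fun u : ℝ => ((0:ℝ), u, (0:ℝ))) ⁻¹' {p | 2 ≤ cnt s p} = ∅ := by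
    ext u
    simp only [Set.mem_preimage, Set.mem_setOf_eq, cnt, if_neg hs0,
      Set.mem_empty_iff_false, iff_false]
    split_ifs <;> omega
  have e3 : (fun u : ℝ => ((0:ℝ), (0:ℝ), u)) ⁻¹' {p | 2 ≤ cnt s p} = ∅ := by
    ext u
    simp only [Set.mem_preimage, Set.mem_setOf_eq, cnt, if_neg hs0,
      Set.mem_empty_iff_false, iff_false]
    split_ifs <;> omega
  have f1 : (fun v : ℝ => (v, v, (0:ℝ))) ⁻¹' {p | 2 ≤ cnt s p} = Set.Ioi s := by
    ext v
    simp only [Set.mem_preimage, Set.mem_setOf_eq, cnt, if_neg hs0, Set.mem_Ioi]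
    split_ifs with h <;> simp [h]
  have f2 : (fun v : ℝ => ((0:ℝ), v, v)) ⁻¹' {p | 2 ≤ cnt s p} = Set.Ioi s := by
    ext v
    simp only [Set.mem_preimage, Set.mem_setOf_eq, cnt, if_neg hs0, Set.mem_Ioi]
    split_ifs with h <;> simp [h]
  have f3 : (fun v : ℝ => (v, (0:ℝ), v)) ⁻¹' {p | 2 ≤ cnt s p} = Set.Ioi s := by
    ext v
    simp only [Set.mem_preimage, Set.mem_setOf_eq, cnt, if_neg hs0, Set.mem_Ioi]
    split_ifs with h <;> simp [h]
  have g0 : (fun w : ℝ => (w, w, w)) ⁻¹' {p | 2 ≤ cnt s p} = Set.Ioi s := by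
    ext w
    simp only [Set.mem_preimage, Set.mem_setOf_eq, cnt, Set.mem_Ioi]
    split_ifs with h <;> simp [h]
  rw [e1, e2, e3, f1, f2, f3, g0, nuV_Ioi hs.1.le hs.2.le, nuW_Ioi hW hs]
  simp only [measure_empty, add_zero, zero_add, mul_zero]
  have hb : (0:ℝ) ≤ (1 - s)^2 := sq_nonneg _
  have hg : (0:ℝ) ≤ (1 - s) * (1 - G1 s) :=
    mul_nonneg (by linarith [hs.2]) (by linarith [G1_le_one hs.2])
  rw [← ENNReal.ofReal_add hb hb, ← ENNReal.ofReal_add (by positivity) hb,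
    ← ENNReal.ofReal_mul (by positivity), ← ENNReal.ofReal_mul (by positivity),
    ← ENNReal.ofReal_add (by positivity) (by positivity)]
  congr 1
  field_simp
  ring

lemma law3_eq1 (nuW : Measure ℝ) [IsProbabilityMeasure nuW]
    (hW : ∀ z, nuW (Set.Iic z) = ENNReal.ofReal (G2 z)) {s : ℝ} (hs : s ∈ Set.Ioo (0:ℝ) 1) :
    law3 nuW {p | cnt s p = 1} = ENNReal.ofReal (3 * (1 - s) / (6 + Real.sqrt 3)) := by
  have hs0 : ¬ s < 0 := by linarith [hs.1]
  have hA : MeasurableSet {p : ℝ × ℝ × ℝ | cnt s p = 1} :=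
    (measurable_cnt s) (measurableSet_singleton 1)
  rw [law3_apply nuW hA]
  have e1 : (fun u : ℝ => (u, (0:ℝ), (0:ℝ))) ⁻¹' {p | cnt s p = 1} = Set.Ioi s := by
    ext u
    simp only [Set.mem_preimage, Set.mem_setOf_eq, cnt, if_neg hs0, Set.mem_Ioi]
    split_ifs with h <;> simp [h]
  have e2 : (fun u : ℝ => ((0:ℝ), u, (0:ℝ))) ⁻¹' {p | cnt s p = 1} = Set.Ioi s := by
    ext u
    simp only [Set.mem_preimage, Set.mem_setOf_eq, cnt, if_neg hs0, Set.mem_Ioi]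
    split_ifs with h <;> simp [h]
  have e3 : (fun u : ℝ => ((0:ℝ), (0:ℝ), u)) ⁻¹' {p | cnt s p = 1} = Set.Ioi s := by
    ext u
    simp only [Set.mem_preimage, Set.mem_setOf_eq, cnt, if_neg hs0, Set.mem_Ioi]
    split_ifs with h <;> simp [h]
  have f1 : (fun v : ℝ => (v, v, (0:ℝ))) ⁻¹' {p | cnt s p = 1} = ∅ := by
    ext v
    simp only [Set.mem_preimage, Set.mem_setOf_eq, cnt, if_neg hs0,
      Set.mem_empty_iff_false, iff_false]
    split_ifs <;> omega
  have f2 : (fun v : ℝ => ((0:ℝ), v, v)) ⁻¹' {p | cnt s p = 1} = ∅ := by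
    ext v
    simp only [Set.mem_preimage, Set.mem_setOf_eq, cnt, if_neg hs0,
      Set.mem_empty_iff_false, iff_false]
    split_ifs <;> omega
  have f3 : (fun v : ℝ => (v, (0:ℝ), v)) ⁻¹' {p | cnt s p = 1} = ∅ := by
    ext v
    simp only [Set.mem_preimage, Set.mem_setOf_eq, cnt, if_neg hs0,
      Set.mem_empty_iff_false, iff_false]
    split_ifs <;> omega
  have g0 : (fun w : ℝ => (w, w, w)) ⁻¹' {p | cnt s p = 1} = ∅ := by
    ext w
    simp only [Set.mem_preimage, Set.mem_setOf_eq, cnt, Set.mem_empty_iff_false, iff_false]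
    split_ifs <;> omega
  rw [e1, e2, e3, f1, f2, f3, g0, unif_Ioi hs.1.le]
  simp only [measure_empty, add_zero, zero_add, mul_zero]
  have hb : (0:ℝ) ≤ 1 - s := by linarith [hs.2]
  rw [← ENNReal.ofReal_add hb hb, ← ENNReal.ofReal_add (by positivity) hb,
    ← ENNReal.ofReal_mul (by positivity)]
  congr 1
  ring

lemma law3_ge1 (nuW : Measure ℝ) [IsProbabilityMeasure nuW]
    (hW : ∀ z, nuW (Set.Iic z) = ENNReal.ofReal (G2 z)) {s : ℝ} (hs : s ∈ Set.Ioo (0:ℝ) 1) :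
    law3 nuW {p | 1 ≤ cnt s p} =
      ENNReal.ofReal ((3 * (1 - s) + 3 * (1 - s)^2 + Real.sqrt 3 * ((1 - s) * (1 - G1 s)))
        / (6 + Real.sqrt 3)) := by
  have hs0 : ¬ s < 0 := by linarith [hs.1]
  have hA : MeasurableSet {p : ℝ × ℝ × ℝ | 1 ≤ cnt s p} :=
    (measurable_cnt s) measurableSet_Ici
  rw [law3_apply nuW hA]
  have e1 : (fun u : ℝ => (u, (0:ℝ), (0:ℝ))) ⁻¹' {p | 1 ≤ cnt s p} = Set.Ioi s := by
    ext u
    simp only [Set.mem_preimage, Set.mem_setOf_eq, cnt, if_neg hs0, Set.mem_Ioi]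
    split_ifs with h <;> simp [h]
  have e2 : (fun u : ℝ => ((0:ℝ), u, (0:ℝ))) ⁻¹' {p | 1 ≤ cnt s p} = Set.Ioi s := by
    ext u
    simp only [Set.mem_preimage, Set.mem_setOf_eq, cnt, if_neg hs0, Set.mem_Ioi]
    split_ifs with h <;> simp [h]
  have e3 : (fun u : ℝ => ((0:ℝ), (0:ℝ), u)) ⁻¹' {p | 1 ≤ cnt s p} = Set.Ioi s := by
    ext u
    simp only [Set.mem_preimage, Set.mem_setOf_eq, cnt, if_neg hs0, Set.mem_Ioi]
    split_ifs with h <;> simp [h]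
  have f1 : (fun v : ℝ => (v, v, (0:ℝ))) ⁻¹' {p | 1 ≤ cnt s p} = Set.Ioi s := by
    ext v
    simp only [Set.mem_preimage, Set.mem_setOf_eq, cnt, if_neg hs0, Set.mem_Ioi]
    split_ifs with h <;> simp [h]
  have f2 : (fun v : ℝ => ((0:ℝ), v, v)) ⁻¹' {p | 1 ≤ cnt s p} = Set.Ioi s := by
    ext v
    simp only [Set.mem_preimage, Set.mem_setOf_eq, cnt, if_neg hs0, Set.mem_Ioi]
    split_ifs with h <;> simp [h]
  have f3 : (fun v : ℝ => (v, (0:ℝ), v)) ⁻¹' {p | 1 ≤ cnt s p} = Set.Ioi s := by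
    ext v
    simp only [Set.mem_preimage, Set.mem_setOf_eq, cnt, if_neg hs0, Set.mem_Ioi]
    split_ifs with h <;> simp [h]
  have g0 : (fun w : ℝ => (w, w, w)) ⁻¹' {p | 1 ≤ cnt s p} = Set.Ioi s := by
    ext w
    simp only [Set.mem_preimage, Set.mem_setOf_eq, cnt, Set.mem_Ioi]
    split_ifs with h <;> simp [h]
  rw [e1, e2, e3, f1, f2, f3, g0, unif_Ioi hs.1.le, nuV_Ioi hs.1.le hs.2.le, nuW_Ioi hW hs]
  have hb : (0:ℝ) ≤ 1 - s := by linarith [hs.2]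
  have hb2 : (0:ℝ) ≤ (1 - s)^2 := sq_nonneg _
  have hg : (0:ℝ) ≤ (1 - s) * (1 - G1 s) :=
    mul_nonneg hb (by linarith [G1_le_one hs.2])
  rw [← ENNReal.ofReal_add hb hb, ← ENNReal.ofReal_add (by positivity) hb,
    ← ENNReal.ofReal_add hb2 hb2, ← ENNReal.ofReal_add (by positivity) hb2,
    ← ENNReal.ofReal_mul (by positivity), ← ENNReal.ofReal_mul (by positivity),
    ← ENNReal.ofReal_mul (by positivity),
    ← ENNReal.ofReal_add (by positivity) (by positivity),
    ← ENNReal.ofReal_add (by positivity) (by positivity)]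
  congr 1
  field_simp
  ring

/-- Under the mixture law `law3 nuW`, where `nuW` has distribution function
`G₂`: for every `s ∈ (0,1)`,
`P(N_{s,3}=2 | N_{s,3}≥2) = √3/((1-G₁(s))/(1-s) + √3)`, which does not converge as `s ↑ 1`;
hence `FD_{3,2}` does not exist, even though `FD_{3,1}` exists. -/
theorem stmt5 {Ω : Type*} [MeasurableSpace Ω] (μ : Measure Ω) [IsProbabilityMeasure μ]
    (nuW : Measure ℝ) [IsProbabilityMeasure nuW]
    (hW : ∀ z, nuW (Set.Iic z) = ENNReal.ofReal (G2 z))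
    (X1 X2 X3 : Ω → ℝ) (h1 : Measurable X1) (h2 : Measurable X2) (h3 : Measurable X3)
    (hlaw : Measure.map (fun ω => (X1 ω, X2 ω, X3 ω)) μ = law3 nuW)
    (N : ℝ → Ω → ℕ)
    (hN : ∀ s ω, N s ω = (if s < X1 ω then 1 else 0) + (if s < X2 ω then 1 else 0)
      + (if s < X3 ω then 1 else 0)) :
    (∀ s ∈ Set.Ioo (0:ℝ) 1,
      condP μ {ω | N s ω = 2} {ω | 2 ≤ N s ω} =
        Real.sqrt 3 / ((1 - G1 s) / (1 - s) + Real.sqrt 3)) ∧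
    (¬ ∃ L : ℝ, Tendsto (fun s => condP μ {ω | N s ω = 2} {ω | 2 ≤ N s ω})
        (𝓝[<] (1:ℝ)) (𝓝 L)) ∧
    Tendsto (fun s => condP μ {ω | N s ω = 1} {ω | 1 ≤ N s ω}) (𝓝[<] (1:ℝ)) (𝓝 1) := by
  have hX : Measurable fun ω => (X1 ω, X2 ω, X3 ω) := h1.prodMk (h2.prodMk h3)
  have hsq3 : Real.sqrt 3 * Real.sqrt 3 = 3 := Real.mul_self_sqrt (by norm_num)
  have hc : (0:ℝ) < 6 + Real.sqrt 3 := by linarith [sqrt3_pos]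
  -- identification of the events with preimages
  have hμ : ∀ (s : ℝ) (P : ℕ → Prop) (hP : MeasurableSet {n : ℕ | P n}),
      μ {ω | P (N s ω)} = law3 nuW {p | P (cnt s p)} := by
    intro s P hP
    have hset : {ω | P (N s ω)} = (fun ω => (X1 ω, X2 ω, X3 ω)) ⁻¹' {p | P (cnt s p)} := by
      ext ω
      simp only [Set.mem_setOf_eq, Set.mem_preimage, hN s ω, cnt]
    have hms : MeasurableSet {p : ℝ × ℝ × ℝ | P (cnt s p)} := (measurable_cnt s) hP
    rw [hset, ← Measure.map_apply hX hms, hlaw]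
  -- the four measure values
  have hm2 : ∀ s ∈ Set.Ioo (0:ℝ) 1, μ {ω | N s ω = 2}
      = ENNReal.ofReal (3 * (1 - s)^2 / (6 + Real.sqrt 3)) := fun s hs => by
    rw [hμ s (fun n => n = 2) (measurableSet_singleton 2), law3_eq2 nuW hW hs]
  have hmge2 : ∀ s ∈ Set.Ioo (0:ℝ) 1, μ {ω | 2 ≤ N s ω}
      = ENNReal.ofReal ((3 * (1 - s)^2 + Real.sqrt 3 * ((1 - s) * (1 - G1 s)))
          / (6 + Real.sqrt 3)) := fun s hs => by
    rw [hμ s (fun n => 2 ≤ n) measurableSet_Ici, law3_ge2 nuW hW hs]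
  have hm1 : ∀ s ∈ Set.Ioo (0:ℝ) 1, μ {ω | N s ω = 1}
      = ENNReal.ofReal (3 * (1 - s) / (6 + Real.sqrt 3)) := fun s hs => by
    rw [hμ s (fun n => n = 1) (measurableSet_singleton 1), law3_eq1 nuW hW hs]
  have hmge1 : ∀ s ∈ Set.Ioo (0:ℝ) 1, μ {ω | 1 ≤ N s ω}
      = ENNReal.ofReal ((3 * (1 - s) + 3 * (1 - s)^2 + Real.sqrt 3 * ((1 - s) * (1 - G1 s)))
          / (6 + Real.sqrt 3)) := fun s hs => by
    rw [hμ s (fun n => 1 ≤ n) measurableSet_Ici, law3_ge1 nuW hW hs]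
  -- Part 1
  have part1 : ∀ s ∈ Set.Ioo (0:ℝ) 1,
      condP μ {ω | N s ω = 2} {ω | 2 ≤ N s ω} =
        Real.sqrt 3 / ((1 - G1 s) / (1 - s) + Real.sqrt 3) := by
    intro s hs
    have hr : (0:ℝ) < 1 - s := by linarith [hs.2]
    have hg0 : (0:ℝ) ≤ 1 - G1 s := by linarith [G1_le_one hs.2]
    have hsub : {ω | N s ω = 2} ∩ {ω | 2 ≤ N s ω} = {ω | N s ω = 2} := by
      apply Set.inter_eq_left.mpr
      intro ω hω
      simp only [Set.mem_setOf_eq] at *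
      omega
    unfold condP
    rw [hsub, hm2 s hs, hmge2 s hs,
      ENNReal.toReal_ofReal (by positivity), ENNReal.toReal_ofReal (by positivity)]
    have hden : (0:ℝ) < 3 * (1 - s)^2 + Real.sqrt 3 * ((1 - s) * (1 - G1 s)) := by
      have hp : (0:ℝ) < 3 * (1 - s)^2 := by positivity
      have hq : (0:ℝ) ≤ Real.sqrt 3 * ((1 - s) * (1 - G1 s)) := by positivity
      linarith
    have hden2 : (0:ℝ) < (1 - G1 s) / (1 - s) + Real.sqrt 3 := by positivity
    rw [div_div_div_cancel_right₀ (ne_of_gt hc)]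
    rw [div_eq_div_iff (ne_of_gt hden) (ne_of_gt hden2)]
    field_simp
    linear_combination (-(1 - G1 s)) * hsq3
  refine ⟨part1, ?_, ?_⟩
  · -- Part 2: no limit
    rintro ⟨L, hL⟩
    -- first sequence
    have hpow : Tendsto (fun k : ℕ => ((1:ℝ)/2)^k) atTop (𝓝 0) :=
      tendsto_pow_atTop_nhds_zero_of_lt_one (by norm_num) (by norm_num)
    have hdiv : ∀ k : ℕ, ((1:ℝ)/2)^k = 1/2^k := fun k => by rw [div_pow, one_pow]
    have memA : ∀ k : ℕ, (1 - 1/2^(k+1) : ℝ) ∈ Set.Ioo (0:ℝ) 1 := by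
      intro k
      have h4 : (2:ℝ) ≤ 2^(k+1) := by
        calc (2:ℝ) = 2^1 := by norm_num
          _ ≤ 2^(k+1) := by apply pow_le_pow_right₀ (by norm_num) (by omega)
      have hpos : (0:ℝ) < 1/2^(k+1) := by positivity
      constructor
      · have : (1:ℝ)/2^(k+1) ≤ 1/2 := by
          apply div_le_div_of_nonneg_left (by norm_num) (by norm_num) h4
        linarith
      · linarith
    have memB : ∀ k : ℕ, (1 - 3/2^(k+2) : ℝ) ∈ Set.Ioo (0:ℝ) 1 := by
      intro k
      have h4 : (4:ℝ) ≤ 2^(k+2) := by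
        calc (4:ℝ) = 2^2 := by norm_num
          _ ≤ 2^(k+2) := by apply pow_le_pow_right₀ (by norm_num) (by omega)
      have hpos : (0:ℝ) < 3/2^(k+2) := by positivity
      constructor
      · have : (3:ℝ)/2^(k+2) ≤ 3/4 := by
          apply div_le_div_of_nonneg_left (by norm_num) (by norm_num) h4
        linarith
      · linarith
    have tendA : Tendsto (fun k : ℕ => (1 - 1/2^(k+1) : ℝ)) atTop (𝓝[<] (1:ℝ)) := by
      apply tendsto_nhdsWithin_of_tendsto_nhds_of_eventually_within
      · have h0 : Tendsto (fun k : ℕ => (1/2^(k+1) : ℝ)) atTop (𝓝 0) := by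
          have := hpow.comp (tendsto_add_atTop_nat 1)
          simpa [Function.comp_def, hdiv] using this
        have h1 : Tendsto (fun k : ℕ => (1 : ℝ) - 1/2^(k+1)) atTop (𝓝 (1 - 0)) :=
          Tendsto.sub tendsto_const_nhds h0
        simpa using h1
      · exact Eventually.of_forall fun k => (memA k).2
    have tendB : Tendsto (fun k : ℕ => (1 - 3/2^(k+2) : ℝ)) atTop (𝓝[<] (1:ℝ)) := by
      apply tendsto_nhdsWithin_of_tendsto_nhds_of_eventually_within
      · have h0 : Tendsto (fun k : ℕ => (3/2^(k+2) : ℝ)) atTop (𝓝 0) := by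
          have h0' := (hpow.comp (tendsto_add_atTop_nat 2)).const_mul (3:ℝ)
          rw [mul_zero] at h0'
          apply h0'.congr
          intro k
          simp only [Function.comp_apply, hdiv]
          ring
        have h1 : Tendsto (fun k : ℕ => (1 : ℝ) - 3/2^(k+2)) atTop (𝓝 (1 - 0)) :=
          Tendsto.sub tendsto_const_nhds h0
        simpa using h1
      · exact Eventually.of_forall fun k => (memB k).2
    have hcA := hL.comp tendA
    have hcB := hL.comp tendB
    have hvalA : ∀ k : ℕ, condP μ {ω | N (1 - 1/2^(k+1)) ω = 2} {ω | 2 ≤ N (1 - 1/2^(k+1)) ω}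
        = Real.sqrt 3 / (1 + Real.sqrt 3) := by
      intro k
      rw [part1 _ (memA k)]
      congr 2
      rw [G1_a (k+1)]
      have hne : (1:ℝ)/2^(k+1) ≠ 0 := by positivity
      have hx : (1:ℝ) - (1 - 1/2^(k+1)) = 1/2^(k+1) := by ring
      rw [hx]
      field_simp
    have hvalB : ∀ k : ℕ, condP μ {ω | N (1 - 3/2^(k+2)) ω = 2} {ω | 2 ≤ N (1 - 3/2^(k+2)) ω}
        = Real.sqrt 3 / (2/3 + Real.sqrt 3) := by
      intro k
      rw [part1 _ (memB k)]
      congr 2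
      rw [G1_b k]
      have hx : (1:ℝ) - (1 - 3/2^(k+2)) = 3/2^(k+2) := by ring
      rw [hx]
      have hp : (0:ℝ) < 2^(k+1) := by positivity
      rw [pow_succ (2:ℝ) (k+1)]
      have h1 : (1:ℝ) - (1 - 1/2^(k+1)) = 1/2^(k+1) := by ring
      rw [h1]
      field_simp
    have hLA : L = Real.sqrt 3 / (1 + Real.sqrt 3) := by
      apply tendsto_nhds_unique hcA
      have : (fun k : ℕ => condP μ {ω | N (1 - 1/2^(k+1)) ω = 2} {ω | 2 ≤ N (1 - 1/2^(k+1)) ω})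
          = fun _ : ℕ => Real.sqrt 3 / (1 + Real.sqrt 3) := funext hvalA
      rw [show ((fun s => condP μ {ω | N s ω = 2} {ω | 2 ≤ N s ω}) ∘
          fun k : ℕ => (1 - 1/2^(k+1) : ℝ)) = fun k : ℕ =>
          condP μ {ω | N (1 - 1/2^(k+1)) ω = 2} {ω | 2 ≤ N (1 - 1/2^(k+1)) ω} from rfl, this]
      exact tendsto_const_nhds
    have hLB : L = Real.sqrt 3 / (2/3 + Real.sqrt 3) := by
      apply tendsto_nhds_unique hcB
      have : (fun k : ℕ => condP μ {ω | N (1 - 3/2^(k+2)) ω = 2} {ω | 2 ≤ N (1 - 3/2^(k+2)) ω})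
          = fun _ : ℕ => Real.sqrt 3 / (2/3 + Real.sqrt 3) := funext hvalB
      rw [show ((fun s => condP μ {ω | N s ω = 2} {ω | 2 ≤ N s ω}) ∘
          fun k : ℕ => (1 - 3/2^(k+2) : ℝ)) = fun k : ℕ =>
          condP μ {ω | N (1 - 3/2^(k+2)) ω = 2} {ω | 2 ≤ N (1 - 3/2^(k+2)) ω} from rfl, this]
      exact tendsto_const_nhds
    have heq : Real.sqrt 3 / (1 + Real.sqrt 3) = Real.sqrt 3 / (2/3 + Real.sqrt 3) := by
      rw [← hLA, ← hLB]
    have hpos1 : (0:ℝ) < 1 + Real.sqrt 3 := by linarith [sqrt3_pos]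
    have hpos2 : (0:ℝ) < 2/3 + Real.sqrt 3 := by linarith [sqrt3_pos]
    rw [div_eq_div_iff (ne_of_gt hpos1) (ne_of_gt hpos2)] at heq
    nlinarith [sqrt3_pos]
  · -- Part 3
    have part3eq : ∀ s ∈ Set.Ioo (0:ℝ) 1,
        condP μ {ω | N s ω = 1} {ω | 1 ≤ N s ω}
          = 3 / (3 + 3 * (1 - s) + Real.sqrt 3 * (1 - G1 s)) := by
      intro s hs
      have hr : (0:ℝ) < 1 - s := by linarith [hs.2]
      have hg0 : (0:ℝ) ≤ 1 - G1 s := by linarith [G1_le_one hs.2]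
      have hsub : {ω | N s ω = 1} ∩ {ω | 1 ≤ N s ω} = {ω | N s ω = 1} := by
        apply Set.inter_eq_left.mpr
        intro ω hω
        simp only [Set.mem_setOf_eq] at *
        omega
      unfold condP
      rw [hsub, hm1 s hs, hmge1 s hs,
        ENNReal.toReal_ofReal (by positivity), ENNReal.toReal_ofReal (by positivity)]
      have hden : (0:ℝ) < 3 * (1 - s) + 3 * (1 - s)^2
          + Real.sqrt 3 * ((1 - s) * (1 - G1 s)) := by
        have hp : (0:ℝ) < 3 * (1 - s) := by linarith
        have hp2 : (0:ℝ) ≤ 3 * (1 - s)^2 := by positivity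
        have hq : (0:ℝ) ≤ Real.sqrt 3 * ((1 - s) * (1 - G1 s)) := by positivity
        linarith
      have hden2 : (0:ℝ) < 3 + 3 * (1 - s) + Real.sqrt 3 * (1 - G1 s) := by
        have hq : (0:ℝ) ≤ Real.sqrt 3 * (1 - G1 s) := by positivity
        linarith
      rw [div_div_div_cancel_right₀ (ne_of_gt hc)]
      rw [div_eq_div_iff (ne_of_gt hden) (ne_of_gt hden2)]
      ring
    have hTend : Tendsto (fun s => 3 / (3 + 3 * (1 - s) + Real.sqrt 3 * (1 - G1 s)))
        (𝓝[<] (1:ℝ)) (𝓝 1) := by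
      have hid : Tendsto (fun s : ℝ => s) (𝓝[<] (1:ℝ)) (𝓝 1) :=
        tendsto_id.mono_left nhdsWithin_le_nhds
      have hA : Tendsto (fun s : ℝ => 3 * (1 - s)) (𝓝[<] (1:ℝ)) (𝓝 0) := by
        have h0 : Tendsto (fun s : ℝ => 1 - s) (𝓝[<] (1:ℝ)) (𝓝 (1 - 1)) :=
          Tendsto.sub tendsto_const_nhds hid
        have := h0.const_mul (3:ℝ)
        simpa using this
      have hB : Tendsto (fun s : ℝ => Real.sqrt 3 * (1 - G1 s)) (𝓝[<] (1:ℝ)) (𝓝 0) := by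
        have h0 : Tendsto (fun s : ℝ => 1 - G1 s) (𝓝[<] (1:ℝ)) (𝓝 (1 - 1)) :=
          Tendsto.sub tendsto_const_nhds G1_tendsto
        have := h0.const_mul (Real.sqrt 3)
        simpa using this
      have hden : Tendsto (fun s : ℝ => 3 + 3 * (1 - s) + Real.sqrt 3 * (1 - G1 s))
          (𝓝[<] (1:ℝ)) (𝓝 3) := by
        have h1 : Tendsto (fun s : ℝ => 3 + 3 * (1 - s)) (𝓝[<] (1:ℝ)) (𝓝 (3 + 0)) :=
          Tendsto.add tendsto_const_nhds hA
        have h2 := Tendsto.add h1 hB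
        simpa using h2
      have hfin := Tendsto.div (tendsto_const_nhds (x := (3:ℝ))) hden (by norm_num)
      simpa [Pi.div_def] using hfin
    apply hTend.congr'
    filter_upwards [Ioo_mem_nhdsLT_of_mem
      (⟨zero_lt_one, le_refl (1:ℝ)⟩ : (1:ℝ) ∈ Set.Ioc (0:ℝ) 1)] with s hs
    exact (part3eq s hs).symm
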